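/- arXiv:1002.2911 — 2 statements merged into one kernel-verified Lean document; each statement's English description precedes it below -/
import Mathlib

section
/- Let C ⊆ ℝ² be open and convex, and let f : C → ℝ be convex and Lipschitz with constant L. Let A ⊆ ℝ, let g : A → ℝ be a bounded function with (x, g(x)) ∈ C for every x ∈ A, suppose the function x ↦ f(x, g(x)) is bounded on A, and fix y ∈ ℝ. Suppose that for every x ∈ A there exists p_x ∈ ℝ such that (p_x, y) ∈ ∂f(x, g(x)) (note that necessarily |p_x| ≤ L). Then the function ω(x) := f(x, g(x)) − y·g(x), x ∈ A, extends to a Lipschitz convex function on ℝ; namely, c(t) := sup{ω(x) + p_x(t − x) : x ∈ A}, t ∈ ℝ, is a Lipschitz convex function on ℝ with c(x) = ω(x) for every x ∈ A. -/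
open Set Filter Topology
open scoped RealInnerProductSpace

noncomputable section

/-- The subdifferential of `f` at `x` relative to the set `C`. -/
def subdiff (C : Set (EuclideanSpace ℝ (Fin 2)))
    (f : EuclideanSpace ℝ (Fin 2) → ℝ) (x : EuclideanSpace ℝ (Fin 2)) :
    Set (EuclideanSpace ℝ (Fin 2)) :=
  {v | ∀ y ∈ C, f x + ⟪v, y - x⟫ ≤ f y}

/-- The point `(a, b)` of `ℝ²`. -/
def mk2 (a b : ℝ) : EuclideanSpace ℝ (Fin 2) :=
  (WithLp.equiv 2 (Fin 2 → ℝ)).symm ![a, b]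

lemma inner_mk2 (a b c d e h : ℝ) : ⟪mk2 a b, mk2 c d - mk2 e h⟫ = a*(c-e)+b*(d-h) := by
  simp [mk2, EuclideanSpace.inner_eq_star_dotProduct]; ring

lemma dist_mk2 (a b c d : ℝ) : dist (mk2 a b) (mk2 c d) = Real.sqrt ((a-c)^2 + (b-d)^2) := by
  simp [mk2, EuclideanSpace.dist_eq, Fin.sum_univ_two, Real.dist_eq, sq_abs]

lemma dist_mk2_fst (a b c : ℝ) : dist (mk2 a b) (mk2 c b) = |a - c| := by
  rw [dist_mk2]; simp [Real.sqrt_sq_eq_abs]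

/-- If `f` is convex and `L`-Lipschitz on an open convex `C ⊆ ℝ²`, `g` is bounded on
`A ⊆ ℝ` with graph in `C`, `x ↦ f(x, g(x))` is bounded on `A`, and for each `x ∈ A`
there is `p_x` with `(p_x, y) ∈ ∂f(x, g(x))`, then `ω(x) := f(x, g(x)) - y g(x)` extends
to the Lipschitz convex function `c(t) = sup_{x ∈ A} (ω(x) + p_x (t - x))` on `ℝ`. -/
theorem convex_lipschitz_extension
    (C : Set (EuclideanSpace ℝ (Fin 2))) (hCopen : IsOpen C) (hCconv : Convex ℝ C)
    (f : EuclideanSpace ℝ (Fin 2) → ℝ) (L : NNReal)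
    (hconv : ConvexOn ℝ C f) (hlip : LipschitzOnWith L f C)
    (A : Set ℝ) (g : ℝ → ℝ)
    (hgbd : ∃ M : ℝ, ∀ x ∈ A, |g x| ≤ M)
    (hgC : ∀ x ∈ A, mk2 x (g x) ∈ C)
    (hfbd : ∃ M : ℝ, ∀ x ∈ A, |f (mk2 x (g x))| ≤ M)
    (y : ℝ) (p : ℝ → ℝ)
    (hp : ∀ x ∈ A, mk2 (p x) y ∈ subdiff C f (mk2 x (g x)))
    (ω c : ℝ → ℝ)
    (hω : ∀ x, ω x = f (mk2 x (g x)) - y * g x)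
    (hc : ∀ t, c t = sSup ((fun x => ω x + p x * (t - x)) '' A)) :
    ConvexOn ℝ univ c ∧ (∃ K : NNReal, LipschitzWith K c) ∧ ∀ x ∈ A, c x = ω x := by
  rcases A.eq_empty_or_nonempty with hA | ⟨a, ha⟩
  · have hc0 : c = fun _ => (0 : ℝ) := by
      funext t; rw [hc t, hA]; simp [Real.sSup_empty]
    refine ⟨?_, ⟨0, ?_⟩, ?_⟩
    · rw [hc0]; exact convexOn_const 0 convex_univ
    · rw [hc0]; exact LipschitzWith.const' 0
    · intro x hx; rw [hA] at hx; exact absurd hx (notMem_empty x)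
  -- |p x| ≤ L for x ∈ A
  have hpL : ∀ x ∈ A, |p x| ≤ (L : ℝ) := by
    intro x hx
    have hz := hgC x hx
    rcases Metric.isOpen_iff.1 hCopen _ hz with ⟨ε, hε, hball⟩
    have key : ∀ s : ℝ, |s| = 1 → p x * s ≤ (L : ℝ) := by
      intro s hs
      have hεs : |x + ε/2 * s - x| = ε/2 := by
        rw [show x + ε/2 * s - x = ε/2 * s by ring, abs_mul, hs, mul_one]
        exact abs_of_pos (by linarith)
      have hwC : mk2 (x + ε/2 * s) (g x) ∈ C := by
        apply hball
        rw [Metric.mem_ball, dist_mk2_fst, hεs]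
        linarith
      have hsub := hp x hx _ hwC
      rw [inner_mk2] at hsub
      have hdist := hlip.dist_le_mul _ hwC _ hz
      rw [dist_mk2_fst, hεs, Real.dist_eq] at hdist
      have h3 : f (mk2 (x + ε/2 * s) (g x)) - f (mk2 x (g x)) ≤ (L : ℝ) * (ε/2) :=
        le_trans (le_abs_self _) hdist
      have h2 : p x * s * (ε/2) ≤ (L : ℝ) * (ε/2) := by nlinarith [hsub, h3]
      exact le_of_mul_le_mul_right h2 (by linarith)
    rcases abs_cases (p x) with ⟨h1, _⟩ | ⟨h1, _⟩
    · rw [h1]; simpa using key 1 (by norm_num)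
    · rw [h1]; simpa using key (-1) (by norm_num)
  -- key subgradient inequality in the first coordinate
  have key : ∀ x ∈ A, ∀ x' ∈ A, ω x + p x * (x' - x) ≤ ω x' := by
    intro x hx x' hx'
    have hsub := hp x hx _ (hgC x' hx')
    rw [inner_mk2] at hsub
    rw [hω x, hω x']
    nlinarith [hsub]
  -- bddAbove
  have hbdd : ∀ t, BddAbove ((fun x => ω x + p x * (t - x)) '' A) := by
    intro t
    refine ⟨ω a + (L : ℝ) * |t - a|, ?_⟩
    rintro _ ⟨x, hx, rfl⟩
    have h1 : ω x + p x * (a - x) ≤ ω a := key x hx a ha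
    have h2 : p x * (t - a) ≤ (L : ℝ) * |t - a| :=
      calc p x * (t - a) ≤ |p x * (t - a)| := le_abs_self _
      _ = |p x| * |t - a| := abs_mul _ _
      _ ≤ (L : ℝ) * |t - a| := by
        apply mul_le_mul_of_nonneg_right (hpL x hx) (abs_nonneg _)
    calc ω x + p x * (t - x) = (ω x + p x * (a - x)) + p x * (t - a) := by ring
    _ ≤ ω a + (L : ℝ) * |t - a| := by linarith
  have hne : ∀ t, ((fun x => ω x + p x * (t - x)) '' A).Nonempty := fun t => ⟨_, ⟨a, ha, rfl⟩⟩
  have hle : ∀ t, ∀ x ∈ A, ω x + p x * (t - x) ≤ c t := by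
    intro t x hx
    rw [hc t]; exact le_csSup (hbdd t) ⟨x, hx, rfl⟩
  refine ⟨?_, ⟨L, ?_⟩, ?_⟩
  · refine ⟨convex_univ, ?_⟩
    intro t1 _ t2 _ α β hα hβ hαβ
    rw [hc (α • t1 + β • t2)]
    apply csSup_le (hne _)
    rintro _ ⟨x, hx, rfl⟩
    simp only [smul_eq_mul]
    have e : ω x + p x * (α * t1 + β * t2 - x)
        = α * (ω x + p x * (t1 - x)) + β * (ω x + p x * (t2 - x)) := by
      linear_combination (p x * x - ω x) * hαβ
    rw [e]
    have h1 : α * (ω x + p x * (t1 - x)) ≤ α * c t1 :=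
      mul_le_mul_of_nonneg_left (hle t1 x hx) hα
    have h2 : β * (ω x + p x * (t2 - x)) ≤ β * c t2 :=
      mul_le_mul_of_nonneg_left (hle t2 x hx) hβ
    linarith
  · apply LipschitzWith.of_dist_le_mul
    intro t1 t2
    rw [Real.dist_eq, Real.dist_eq, abs_sub_le_iff]
    have main : ∀ u v : ℝ, c u - c v ≤ (L : ℝ) * |u - v| := by
      intro u v
      rw [hc u, sub_le_iff_le_add]
      apply csSup_le (hne u)
      rintro _ ⟨x, hx, rfl⟩
      have h1 : ω x + p x * (v - x) ≤ c v := hle v x hx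
      have h2 : p x * (u - v) ≤ (L : ℝ) * |u - v| :=
        calc p x * (u - v) ≤ |p x * (u - v)| := le_abs_self _
        _ = |p x| * |u - v| := abs_mul _ _
        _ ≤ (L : ℝ) * |u - v| := mul_le_mul_of_nonneg_right (hpL x hx) (abs_nonneg _)
      calc ω x + p x * (u - x) = (ω x + p x * (v - x)) + p x * (u - v) := by ring
      _ ≤ (L : ℝ) * |u - v| + c v := by linarith
    constructor
    · exact main t1 t2
    · have := main t2 t1
      rwa [abs_sub_comm] at this
  · intro x hx
    rw [hc x]
    apply IsGreatest.csSup_eq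
    constructor
    · exact ⟨x, hx, by ring⟩
    · rintro _ ⟨x', hx', rfl⟩
      exact key x' hx' x hx
end
end

section
/- Let C ⊆ ℝ² be open and convex, and let f : C → ℝ be convex and Lipschitz with constant L. Let A ⊆ ℝ, let g : A → ℝ be a bounded function with (x, g(x)) ∈ C for every x ∈ A, and suppose the function x ↦ f(x, g(x)) is bounded on A. Let y, y' ∈ ℝ with y ≠ y', and suppose that for every x ∈ A there exist p_x, p'_x ∈ ℝ such that (p_x, y) ∈ ∂f(x, g(x)) and (p'_x, y') ∈ ∂f(x, g(x)). Then g (restricted to A) extends to a Lipschitz DC function on ℝ, i.e., there exist convex Lipschitz functions c₁, c₂ on ℝ such that g(x) = c₁(x) − c₂(x) for every x ∈ A (up to the factor 1/(y' − y): concretely, g = (ω' − ω)/(y' − y) on A, where ω(x) = f(x,g(x)) − y·g(x) and ω'(x) = f(x,g(x)) − y'·g(x) each extend to Lipschitz convex functions on ℝ). -/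
open Set Filter Topology
open scoped RealInnerProductSpace

noncomputable section

lemma inner_mk2_s8 (a b : ℝ) (w : EuclideanSpace ℝ (Fin 2)) :
    ⟪mk2 a b, w⟫ = a * w 0 + b * w 1 := by
  simp [PiLp.inner_apply, Fin.sum_univ_two, mk2, RCLike.inner_apply]
  ring

lemma norm_mk2_sq (a b : ℝ) : ‖mk2 a b‖ ^ 2 = a ^ 2 + b ^ 2 := by
  rw [← real_inner_self_eq_norm_sq, inner_mk2_s8]
  show a * a + b * b = _
  ring

lemma abs_le_norm_mk2 (a b : ℝ) : |a| ≤ ‖mk2 a b‖ := by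
  have h := norm_mk2_sq a b
  nlinarith [norm_nonneg (mk2 a b), abs_nonneg a, sq_abs a]

lemma mk2_sub_apply0 (a b c d : ℝ) : (mk2 a b - mk2 c d) 0 = a - c := rfl

lemma mk2_sub_apply1 (a b c d : ℝ) : (mk2 a b - mk2 c d) 1 = b - d := rfl

/-- Upper bound on subgradients of a Lipschitz function on an open set. -/
lemma subdiff_norm_le (C : Set (EuclideanSpace ℝ (Fin 2))) (hCopen : IsOpen C)
    (f : EuclideanSpace ℝ (Fin 2) → ℝ) (L : NNReal) (hlip : LipschitzOnWith L f C)
    {z v : EuclideanSpace ℝ (Fin 2)} (hz : z ∈ C) (hv : v ∈ subdiff C f z) :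
    ‖v‖ ≤ L := by
  obtain ⟨ε, hε, hball⟩ := Metric.isOpen_iff.mp hCopen z hz
  rcases eq_or_lt_of_le (norm_nonneg v) with h0 | h0
  · rw [← h0]; exact L.coe_nonneg
  · set t : ℝ := ε / (2 * ‖v‖) with ht
    have htpos : 0 < t := div_pos hε (by positivity)
    set w := z + t • v with hw
    have hwz : w - z = t • v := by rw [hw]; abel
    have hnorm : ‖w - z‖ = ε / 2 := by
      rw [hwz, norm_smul, Real.norm_eq_abs, abs_of_pos htpos, ht]
      field_simp
    have hwC : w ∈ C := hball (by
      rw [Metric.mem_ball, dist_eq_norm, hnorm]; linarith)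
    have h1 : f z + ⟪v, w - z⟫ ≤ f w := hv w hwC
    have h2 : ⟪v, w - z⟫ = t * ‖v‖ ^ 2 := by
      rw [hwz, real_inner_smul_right, real_inner_self_eq_norm_sq]
    have h3 : f w - f z ≤ L * ‖w - z‖ := by
      have := hlip.dist_le_mul w hwC z hz
      rw [Real.dist_eq, dist_eq_norm] at this
      calc f w - f z ≤ |f w - f z| := le_abs_self _
        _ ≤ L * ‖w - z‖ := this
    rw [hnorm] at h3
    rw [h2] at h1
    have ht' : t * ‖v‖ = ε / 2 := by rw [ht]; field_simp
    nlinarith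
/-- Supremum of a family of uniformly Lipschitz affine minorants. -/
lemma sup_affine (A : Set ℝ) (hA : A.Nonempty) (ω q : ℝ → ℝ) (K : ℝ) (hK : 0 ≤ K)
    (hqb : ∀ a ∈ A, |q a| ≤ K)
    (hsub : ∀ a ∈ A, ∀ b ∈ A, ω a + q a * (b - a) ≤ ω b) :
    ∃ c : ℝ → ℝ, ConvexOn ℝ univ c ∧ LipschitzWith (Real.toNNReal K) c ∧
      ∀ b ∈ A, c b = ω b := by
  haveI : Nonempty A := hA.to_subtype
  obtain ⟨x₀, hx₀⟩ := hA
  set c : ℝ → ℝ := fun x => ⨆ a : A, (ω a + q a * (x - a)) with hc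
  have hbdd : ∀ x : ℝ, BddAbove (range fun a : A => ω a + q a * (x - a)) := by
    intro x
    refine ⟨ω x₀ + K * |x - x₀|, ?_⟩
    rintro _ ⟨a, rfl⟩
    dsimp only
    have h1 : ω a + q a * (x₀ - a) ≤ ω x₀ := hsub a a.2 x₀ hx₀
    have h2 : q a * (x - x₀) ≤ K * |x - x₀| := by
      calc q a * (x - x₀) ≤ |q a * (x - x₀)| := le_abs_self _
        _ = |q a| * |x - x₀| := abs_mul _ _
        _ ≤ K * |x - x₀| := by
            exact mul_le_mul_of_nonneg_right (hqb a a.2) (abs_nonneg _)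
    have h3 : q ↑a * (x - ↑a) = q ↑a * (x₀ - ↑a) + q ↑a * (x - x₀) := by ring
    linarith
  have hle : ∀ a : A, ∀ x : ℝ, ω a + q a * (x - a) ≤ c x := fun a x =>
    le_ciSup (hbdd x) a
  have hshift : ∀ x x' : ℝ, c x ≤ c x' + K * |x - x'| := by
    intro x x'
    refine ciSup_le fun a => ?_
    have h2 : q a * (x - x') ≤ K * |x - x'| := by
      calc q a * (x - x') ≤ |q a| * |x - x'| := by
            rw [← abs_mul]; exact le_abs_self _
        _ ≤ K * |x - x'| := mul_le_mul_of_nonneg_right (hqb a a.2) (abs_nonneg _)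
    have := hle a x'
    nlinarith
  refine ⟨c, ⟨convex_univ, ?_⟩, ?_, ?_⟩
  · intro x _ x' _ t s ht hs hts
    refine ciSup_le fun a => ?_
    have key : ω a + q a * (t • x + s • x' - a)
        = t * (ω a + q a * (x - a)) + s * (ω a + q a * (x' - a)) := by
      simp only [smul_eq_mul]
      linear_combination (q ↑a * ↑a - ω ↑a) * hts
    rw [key]
    have h1 := mul_le_mul_of_nonneg_left (hle a x) ht
    have h2 := mul_le_mul_of_nonneg_left (hle a x') hs
    simpa [smul_eq_mul] using add_le_add h1 h2
  · refine LipschitzWith.of_dist_le_mul fun x x' => ?_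
    rw [Real.dist_eq, Real.dist_eq]
    have h1 := hshift x x'
    have h2 := hshift x' x
    rw [abs_sub_comm x' x] at h2
    have hcoe : (Real.toNNReal K : ℝ) = K := Real.coe_toNNReal K hK
    rw [hcoe, abs_sub_le_iff]
    constructor <;> linarith
  · intro b hb
    refine le_antisymm (ciSup_le fun a => hsub a a.2 b hb) ?_
    simpa using hle ⟨b, hb⟩ b

lemma lipschitz_const_mul (r : ℝ) {K : NNReal} {c : ℝ → ℝ} (h : LipschitzWith K c) :
    LipschitzWith (‖r‖₊ * K) (fun x => r * c x) := by
  refine LipschitzWith.of_dist_le_mul fun x x' => ?_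
  have := h.dist_le_mul x x'
  rw [Real.dist_eq, Real.dist_eq] at *
  calc |r * c x - r * c x'| = |r| * |c x - c x'| := by rw [← abs_mul]; ring_nf
    _ ≤ |r| * (K * |x - x'|) := mul_le_mul_of_nonneg_left this (abs_nonneg r)
    _ = ‖r‖₊ * K * |x - x'| := by
        push_cast [Real.norm_eq_abs]
        ring

/-- If `f` is convex and `L`-Lipschitz on an open convex `C ⊆ ℝ²`, `g` is bounded on
`A ⊆ ℝ` with graph in `C`, `x ↦ f(x, g(x))` is bounded on `A`, `y ≠ y'`, and for each
`x ∈ A` there are `p_x, p'_x` with `(p_x, y) ∈ ∂f(x, g(x))` and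
`(p'_x, y') ∈ ∂f(x, g(x))`, then `g` extends from `A` to a Lipschitz DC function on `ℝ`:
there are convex Lipschitz `c₁, c₂` on `ℝ` with `g = c₁ - c₂` on `A`. -/
theorem restriction_extends_to_lipschitz_DC
    (C : Set (EuclideanSpace ℝ (Fin 2))) (hCopen : IsOpen C) (hCconv : Convex ℝ C)
    (f : EuclideanSpace ℝ (Fin 2) → ℝ) (L : NNReal)
    (hconv : ConvexOn ℝ C f) (hlip : LipschitzOnWith L f C)
    (A : Set ℝ) (g : ℝ → ℝ)
    (hgbd : ∃ M : ℝ, ∀ x ∈ A, |g x| ≤ M)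
    (hgC : ∀ x ∈ A, mk2 x (g x) ∈ C)
    (hfbd : ∃ M : ℝ, ∀ x ∈ A, |f (mk2 x (g x))| ≤ M)
    (y y' : ℝ) (hyy' : y ≠ y') (p p' : ℝ → ℝ)
    (hp : ∀ x ∈ A, mk2 (p x) y ∈ subdiff C f (mk2 x (g x)))
    (hp' : ∀ x ∈ A, mk2 (p' x) y' ∈ subdiff C f (mk2 x (g x))) :
    ∃ c₁ c₂ : ℝ → ℝ,
      ConvexOn ℝ univ c₁ ∧ ConvexOn ℝ univ c₂ ∧
      (∃ K₁ : NNReal, LipschitzWith K₁ c₁) ∧ (∃ K₂ : NNReal, LipschitzWith K₂ c₂) ∧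
      ∀ x ∈ A, g x = c₁ x - c₂ x := by
  rcases A.eq_empty_or_nonempty with hA | hA
  · subst hA
    exact ⟨0, 0, convexOn_const 0 convex_univ, convexOn_const 0 convex_univ,
      ⟨0, LipschitzWith.const 0⟩, ⟨0, LipschitzWith.const 0⟩, fun x hx => absurd hx (by simp)⟩
  -- bounds on the subgradient components
  have hpb : ∀ a ∈ A, |p a| ≤ (L : ℝ) := fun a ha =>
    (abs_le_norm_mk2 (p a) y).trans
      (subdiff_norm_le C hCopen f L hlip (hgC a ha) (hp a ha))
  have hpb' : ∀ a ∈ A, |p' a| ≤ (L : ℝ) := fun a ha =>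
    (abs_le_norm_mk2 (p' a) y').trans
      (subdiff_norm_le C hCopen f L hlip (hgC a ha) (hp' a ha))
  -- the two auxiliary functions
  set ω : ℝ → ℝ := fun x => f (mk2 x (g x)) - y * g x with hω
  set ω' : ℝ → ℝ := fun x => f (mk2 x (g x)) - y' * g x with hω'
  have hsub : ∀ a ∈ A, ∀ b ∈ A, ω a + p a * (b - a) ≤ ω b := by
    intro a ha b hb
    have h := hp a ha (mk2 b (g b)) (hgC b hb)
    rw [inner_mk2_s8, mk2_sub_apply0, mk2_sub_apply1] at h
    simp only [hω]
    nlinarith [h]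
  have hsub' : ∀ a ∈ A, ∀ b ∈ A, ω' a + p' a * (b - a) ≤ ω' b := by
    intro a ha b hb
    have h := hp' a ha (mk2 b (g b)) (hgC b hb)
    rw [inner_mk2_s8, mk2_sub_apply0, mk2_sub_apply1] at h
    simp only [hω']
    nlinarith [h]
  obtain ⟨c, hcconv, hclip, hceq⟩ := sup_affine A hA ω p L L.coe_nonneg hpb hsub
  obtain ⟨c', hcconv', hclip', hceq'⟩ := sup_affine A hA ω' p' L L.coe_nonneg hpb' hsub'
  set d : ℝ := y' - y with hd
  have hd0 : d ≠ 0 := sub_ne_zero.mpr (Ne.symm hyy')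
  have hgval : ∀ b ∈ A, g b = (1 / d) * c b - (1 / d) * c' b := by
    intro b hb
    rw [hceq b hb, hceq' b hb]
    simp only [hω, hω']
    field_simp [hd]
    ring
  rcases le_or_gt 0 (1 / d) with hs | hs
  · refine ⟨fun x => (1 / d) * c x, fun x => (1 / d) * c' x, ?_, ?_, ?_, ?_, ?_⟩
    · simpa [smul_eq_mul] using hcconv.smul hs
    · simpa [smul_eq_mul] using hcconv'.smul hs
    · exact ⟨_, lipschitz_const_mul (1 / d) hclip⟩
    · exact ⟨_, lipschitz_const_mul (1 / d) hclip'⟩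
    · exact hgval
  · refine ⟨fun x => (-(1 / d)) * c' x, fun x => (-(1 / d)) * c x, ?_, ?_, ?_, ?_, ?_⟩
    · simpa [smul_eq_mul] using hcconv'.smul (by linarith : (0:ℝ) ≤ -(1 / d))
    · simpa [smul_eq_mul] using hcconv.smul (by linarith : (0:ℝ) ≤ -(1 / d))
    · exact ⟨_, lipschitz_const_mul (-(1 / d)) hclip'⟩
    · exact ⟨_, lipschitz_const_mul (-(1 / d)) hclip⟩
    · intro b hb
      rw [hgval b hb]
      ring
end
end
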